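/- The Böhm sequence of fixed point combinators contains no duplicates: for all natural numbers n ≠ m, Yₙ ≠β Yₘ, where Y₀ = λf.(λx.f(xx))(λx.f(xx)) is Curry's fpc and, for n ≥ 1, Yₙ = (ηη)δ⋯δ is ηη applied to n−1 copies of δ (association to the left). -/

import Mathlib

/-- Untyped λ-terms in de Bruijn notation (the variables are `ℕ`). -/
inductive Lam : Type
  | var : ℕ → Lam
  | app : Lam → Lam → Lam
  | abs : Lam → Lam
  deriving DecidableEq

namespace Lam

/-- Shift the free de Bruijn indices `≥ d` up by one. -/
def lift (d : ℕ) : Lam → Lam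
  | var n => if n < d then var n else var (n + 1)
  | app s t => app (lift d s) (lift d t)
  | abs t => abs (lift (d + 1) t)

/-- Capture-avoiding substitution `t[k := u]`. -/
def subst : Lam → ℕ → Lam → Lam
  | var n, k, u => if n < k then var n else if n = k then u else var (n - 1)
  | app s t, k, u => app (subst s k u) (subst t k u)
  | abs t, k, u => abs (subst t (k + 1) (lift 0 u))

/-- One-step β-reduction `→β`: the compatible closure of the β-rule. -/
inductive Beta : Lam → Lam → Prop
  | beta (t u : Lam) : Beta (Lam.app (Lam.abs t) u) (subst t 0 u)
  | appL {s s' : Lam} (t : Lam) : Beta s s' → Beta (Lam.app s t) (Lam.app s' t)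
  | appR (s : Lam) {t t' : Lam} : Beta t t' → Beta (Lam.app s t) (Lam.app s t')
  | abs {t t' : Lam} : Beta t t' → Beta (Lam.abs t) (Lam.abs t')

/-- `↠β`: the reflexive–transitive closure of `→β`. -/
def BetaStar : Lam → Lam → Prop := Relation.ReflTransGen Beta

/-- `→β^k`: the `k`-fold composition of `→β`. -/
def BetaN : ℕ → Lam → Lam → Prop
  | 0, s, t => s = t
  | k + 1, s, t => ∃ u, Beta s u ∧ BetaN k u t

/-- `=β`, β-convertibility: the equivalence closure of `→β`. -/
inductive Conv : Lam → Lam → Prop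
  | rel {s t : Lam} : Beta s t → Conv s t
  | refl (s : Lam) : Conv s s
  | symm {s t : Lam} : Conv s t → Conv t s
  | trans {s t u : Lam} : Conv s t → Conv t u → Conv s u

/-- The free variables of a term (as de Bruijn indices). -/
def FV : Lam → Finset ℕ
  | var n => {n}
  | app s t => FV s ∪ FV t
  | abs t => ((FV t).erase 0).image (· - 1)

/-- `Y` is a fixed point combinator (fpc): `Y x =β x (Y x)` for a variable `x` not free in `Y`. -/
def IsFPC (Y : Lam) : Prop :=
  ∀ x : ℕ, x ∉ FV Y → Conv (app Y (var x)) (app (var x) (app Y (var x)))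

/-- `I = λx.x` -/
def combI : Lam := abs (var 0)

/-- `S = λxyz.xz(yz)` -/
def combS : Lam := abs (abs (abs (app (app (var 2) (var 0)) (app (var 1) (var 0)))))

/-- `B = λxyz.x(yz)` -/
def combB : Lam := abs (abs (abs (app (var 2) (app (var 1) (var 0)))))

/-- `δ = λab.b(ab)` -/
def delta : Lam := abs (abs (app (var 0) (app (var 1) (var 0))))

/-- `η = λxf.f(xxf)` -/
def etaC : Lam := abs (abs (app (var 0) (app (app (var 1) (var 1)) (var 0))))

/-- Curry's fpc `Y₀ = λf.(λx.f(xx))(λx.f(xx))` -/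
def curryY : Lam :=
  abs (app (abs (app (var 1) (app (var 0) (var 0))))
    (abs (app (var 1) (app (var 0) (var 0)))))

/-- `A B ⋯ B`: `A` applied to `n` copies of `B`, associating to the left. -/
def appN (A B : Lam) : ℕ → Lam
  | 0 => A
  | n + 1 => app (appN A B n) B

/-- `M N₁ ⋯ Nₘ`: `M` applied to the terms in `L`, associating to the left. -/
def appList (M : Lam) (L : List Lam) : Lam := L.foldl app M

/-- The Böhm sequence: `Y 0` is Curry's fpc, and `Y n = (ηη)δ⋯δ` (`n-1` copies of `δ`). -/
def boehmY : ℕ → Lam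
  | 0 => curryY
  | n + 1 => appN (app etaC etaC) delta n


/-! ### Substitution lemmas -/

theorem lift_lift (t : Lam) : ∀ i k, i ≤ k → lift i (lift k t) = lift (k+1) (lift i t) := by
  induction t with
  | var n =>
    intro i k h
    simp only [lift]
    split_ifs <;> simp only [lift] <;> split_ifs <;> (try rfl) <;> (exfalso; omega)
  | app s t ihs iht => intro i k h; simp only [lift, ihs _ _ h, iht _ _ h]
  | abs t ih => intro i k h; simp only [lift, ih (i+1) (k+1) (by omega)]

theorem subst_lift (t : Lam) : ∀ k u, subst (lift k t) k u = t := by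
  induction t with
  | var n =>
    intro k u
    simp only [lift]
    split_ifs <;> simp only [subst] <;> split_ifs <;> (try (exfalso; omega))
    · rfl
    · simp only [Nat.add_sub_cancel]
  | app s t ihs iht => intro k u; simp only [lift, subst, ihs, iht]
  | abs t ih => intro k u; simp only [lift, subst, ih]

theorem lift_subst (t : Lam) :
    ∀ i j u, j ≤ i → lift i (subst t j u) = subst (lift (i+1) t) j (lift i u) := by
  induction t with
  | var n =>
    intro i j u h
    simp only [subst, lift]
    split_ifs <;> simp only [subst, lift] <;> split_ifs <;>
      first
        | rfl
        | (exfalso; omega)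
        | (congr 1; omega)
  | app s t ihs iht => intro i j u h; simp only [lift, subst, ihs _ _ _ h, iht _ _ _ h]
  | abs t ih =>
    intro i j u h
    simp only [lift, subst, ih (i+1) (j+1) _ (by omega), lift_lift u 0 i (by omega)]

theorem lift_subst_lt (t : Lam) :
    ∀ i j u, i ≤ j → lift i (subst t j u) = subst (lift i t) (j+1) (lift i u) := by
  induction t with
  | var n =>
    intro i j u h
    simp only [subst, lift]
    split_ifs <;> simp only [subst, lift] <;> split_ifs <;>
      first
        | rfl
        | (exfalso; omega)
        | (congr 1; omega)
  | app s t ihs iht => intro i j u h; simp only [lift, subst, ihs _ _ _ h, iht _ _ _ h]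
  | abs t ih =>
    intro i j u h
    simp only [lift, subst, ih (i+1) (j+1) _ (by omega), lift_lift u 0 i (by omega)]

theorem subst_subst (t : Lam) :
    ∀ i j u v, i ≤ j →
      subst (subst t i u) j v = subst (subst t (j+1) (lift i v)) i (subst u j v) := by
  induction t with
  | var n =>
    intro i j u v h
    simp only [subst]
    split_ifs <;> (try simp only [subst]) <;> (try split_ifs) <;>
      first
        | rfl
        | (exfalso; omega)
        | (congr 1; omega)
        | (rw [subst_lift])
  | app s t ihs iht => intro i j u v h; simp only [subst, ihs _ _ _ _ h, iht _ _ _ _ h]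
  | abs t ih =>
    intro i j u v h
    simp only [subst, ih (i+1) (j+1) _ _ (by omega), lift_lift v 0 i (by omega),
      lift_subst_lt u 0 j _ (by omega)]

/-! ### Parallel reduction -/

inductive Par : Lam → Lam → Prop
  | var (n : ℕ) : Par (var n) (var n)
  | app {s s' t t' : Lam} : Par s s' → Par t t' → Par (app s t) (app s' t')
  | abs {t t' : Lam} : Par t t' → Par (abs t) (abs t')
  | beta {t t' u u' : Lam} : Par t t' → Par u u' → Par (app (abs t) u) (subst t' 0 u')

theorem Par.refl (t : Lam) : Par t t := by
  induction t with
  | var n => exact Par.var n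
  | app s t ihs iht => exact Par.app ihs iht
  | abs t ih => exact Par.abs ih

theorem Par.of_beta {s t : Lam} (h : Beta s t) : Par s t := by
  induction h with
  | beta t u => exact Par.beta (Par.refl t) (Par.refl u)
  | appL t _ ih => exact Par.app ih (Par.refl t)
  | appR s _ ih => exact Par.app (Par.refl s) ih
  | abs _ ih => exact Par.abs ih

theorem BetaStar.appL {s s' : Lam} (t : Lam) (h : BetaStar s s') :
    BetaStar (app s t) (app s' t) :=
  Relation.ReflTransGen.lift (fun x => app x t) (fun _ _ h => Beta.appL t h) _ _ h

theorem BetaStar.appR (s : Lam) {t t' : Lam} (h : BetaStar t t') :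
    BetaStar (app s t) (app s t') :=
  Relation.ReflTransGen.lift (fun x => app s x) (fun _ _ h => Beta.appR s h) _ _ h

theorem BetaStar.abs {t t' : Lam} (h : BetaStar t t') : BetaStar (abs t) (abs t') :=
  Relation.ReflTransGen.lift (fun x => Lam.abs x) (fun _ _ h => Beta.abs h) _ _ h

theorem Par.to_betaStar {s t : Lam} (h : Par s t) : BetaStar s t := by
  induction h with
  | var n => exact Relation.ReflTransGen.refl
  | app _ _ ihs iht => exact (BetaStar.appL _ ihs).trans (BetaStar.appR _ iht)
  | abs _ ih => exact BetaStar.abs ih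
  | @beta t t' u u' _ _ iht ihu =>
    exact ((BetaStar.appL _ (BetaStar.abs iht)).trans (BetaStar.appR _ ihu)).tail
      (Beta.beta t' u')

theorem Par.lift {t t' : Lam} (h : Par t t') : ∀ d, Par (lift d t) (lift d t') := by
  induction h with
  | var n => intro d; simp only [Lam.lift]; split_ifs <;> exact Par.refl _
  | app _ _ ihs iht => intro d; exact Par.app (ihs d) (iht d)
  | abs _ ih => intro d; exact Par.abs (ih (d+1))
  | @beta a a' u u' _ _ iha ihu =>
    intro d
    simp only [Lam.lift]
    rw [lift_subst a' d 0 u' (Nat.zero_le d)]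
    exact Par.beta (iha (d+1)) (ihu d)

theorem Par.subst {t t' : Lam} (h : Par t t') :
    ∀ (k : ℕ) {u u' : Lam}, Par u u' → Par (Lam.subst t k u) (Lam.subst t' k u') := by
  induction h with
  | var n =>
    intro k u u' hu
    simp only [Lam.subst]
    split_ifs
    · exact Par.refl _
    · exact hu
    · exact Par.refl _
  | app _ _ ihs iht => intro k u u' hu; exact Par.app (ihs k hu) (iht k hu)
  | abs _ ih => intro k u u' hu; exact Par.abs (ih (k+1) (hu.lift 0))
  | @beta a a' b b' _ _ iha ihb =>
    intro k u u' hu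
    simp only [Lam.subst]
    rw [subst_subst a' 0 k b' u' (Nat.zero_le k)]
    exact Par.beta (iha (k+1) (hu.lift 0)) (ihb k hu)

theorem Par.abs_inv {t z : Lam} (h : Par (Lam.abs t) z) : ∃ t', z = Lam.abs t' ∧ Par t t' := by
  cases h with
  | abs h => exact ⟨_, rfl, h⟩

theorem Par.diamond {a b c : Lam} (hab : Par a b) (hac : Par a c) :
    ∃ d, Par b d ∧ Par c d := by
  induction hab generalizing c with
  | var n => cases hac with | var => exact ⟨Lam.var n, Par.var n, Par.var n⟩
  | @app s s' t t' hs ht ihs iht =>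
    cases hac with
    | app hs2 ht2 =>
      obtain ⟨d1, h1, h2⟩ := ihs hs2
      obtain ⟨d2, h3, h4⟩ := iht ht2
      exact ⟨Lam.app d1 d2, Par.app h1 h3, Par.app h2 h4⟩
    | @beta a a2 u u2 ha2 hu2 =>
      obtain ⟨a1, rfl, ha1⟩ := Par.abs_inv hs
      obtain ⟨d1, h1, h2⟩ := ihs (Par.abs ha2)
      obtain ⟨a3, rfl, h1'⟩ := Par.abs_inv h1
      have h2' : Par a2 a3 := by cases h2 with | abs h => exact h
      obtain ⟨d2, h3, h4⟩ := iht hu2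
      exact ⟨Lam.subst a3 0 d2, Par.beta h1' h3, Par.subst h2' 0 h4⟩
  | @abs t t' ht ih =>
    obtain ⟨t2, rfl, ht2⟩ := Par.abs_inv hac
    obtain ⟨d, h1, h2⟩ := ih ht2
    exact ⟨Lam.abs d, Par.abs h1, Par.abs h2⟩
  | @beta a a' u u' ha hu iha ihu =>
    cases hac with
    | app hs2 ht2 =>
      obtain ⟨a2, rfl, ha2⟩ := Par.abs_inv hs2
      obtain ⟨a3, h1, h2⟩ := iha ha2
      obtain ⟨u3, h3, h4⟩ := ihu ht2
      exact ⟨Lam.subst a3 0 u3, Par.subst h1 0 h3, Par.beta h2 h4⟩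
    | @beta _ a2 _ u2 ha2 hu2 =>
      obtain ⟨a3, h1, h2⟩ := iha ha2
      obtain ⟨u3, h3, h4⟩ := ihu hu2
      exact ⟨Lam.subst a3 0 u3, Par.subst h1 0 h3, Par.subst h2 0 h4⟩

theorem parStar_join (h : Conv s t) :
    Relation.Join (Relation.ReflTransGen Par) s t := by
  have hcr : ∀ a b c : Lam, Par a b → Par a c →
      ∃ d, Relation.ReflGen Par b d ∧ Relation.ReflTransGen Par c d := by
    intro a b c hab hac
    obtain ⟨d, h1, h2⟩ := Par.diamond hab hac
    exact ⟨d, Relation.ReflGen.single h1, Relation.ReflTransGen.single h2⟩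
  have hequiv := Relation.equivalence_join_reflTransGen hcr
  induction h with
  | rel h => exact ⟨_, Relation.ReflTransGen.single (Par.of_beta h), Relation.ReflTransGen.refl⟩
  | refl s => exact hequiv.refl s
  | symm _ ih => exact hequiv.symm ih
  | trans _ _ ih1 ih2 => exact hequiv.trans ih1 ih2

theorem conv_join {s t : Lam} (h : Conv s t) : ∃ u, BetaStar s u ∧ BetaStar t u := by
  obtain ⟨u, h1, h2⟩ := parStar_join h
  have conv : ∀ {a b : Lam}, Relation.ReflTransGen Par a b → BetaStar a b := by
    intro a b hab
    induction hab with
    | refl => exact Relation.ReflTransGen.refl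
    | tail _ hstep ih => exact ih.trans (Par.to_betaStar hstep)
  exact ⟨u, conv h1, conv h2⟩

/-! ### Boundedness (closed terms) -/

def Bnd : ℕ → Lam → Prop
  | c, var n => n < c
  | c, app s t => Bnd c s ∧ Bnd c t
  | c, abs t => Bnd (c+1) t

theorem Bnd.mono : ∀ {t : Lam} {c d : ℕ}, Bnd c t → c ≤ d → Bnd d t := by
  intro t
  induction t with
  | var n => intro c d h hle; simp only [Bnd] at *; omega
  | app s t ihs iht => intro c d h hle; exact ⟨ihs h.1 hle, iht h.2 hle⟩
  | abs t ih => intro c d h hle; exact ih h (by omega)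

theorem Bnd.lift_eq : ∀ {t : Lam} {c d : ℕ}, Bnd c t → c ≤ d → lift d t = t := by
  intro t
  induction t with
  | var n =>
    intro c d h hle; simp only [Bnd] at h
    simp only [lift]; rw [if_pos (show n < d by omega)]
  | app s t ihs iht => intro c d h hle; simp only [lift, ihs h.1 hle, iht h.2 hle]
  | abs t ih =>
    intro c d h hle
    simp only [lift, ih (show Bnd (c+1) t from h) (show c+1 ≤ d+1 by omega)]

theorem Bnd.subst_eq : ∀ {t : Lam} {c k : ℕ} {u : Lam}, Bnd c t → c ≤ k → subst t k u = t := by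
  intro t
  induction t with
  | var n =>
    intro c k u h hle; simp only [Bnd] at h
    simp only [subst]; rw [if_pos (show n < k by omega)]
  | app s t ihs iht => intro c k u h hle; simp only [subst, ihs h.1 hle, iht h.2 hle]
  | abs t ih =>
    intro c k u h hle
    simp only [subst, ih (show Bnd (c+1) t from h) (show c+1 ≤ k+1 by omega)]

/-! ### Normal-form pieces -/

def hasRedex : Lam → Bool
  | var _ => false
  | abs t => hasRedex t
  | app (abs _) _ => true
  | app s t => hasRedex s || hasRedex t

theorem Beta.hasRedex {s t : Lam} (h : Beta s t) : hasRedex s = true := by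
  induction h with
  | beta t u => rfl
  | @appL s s' t _ ih => cases s <;> simp_all [Lam.hasRedex]
  | @appR s t t' _ ih => cases s <;> simp_all [Lam.hasRedex]
  | abs _ ih => exact ih

/-! ### The reduct classes -/

def omg : Lam := abs (app (var 1) (app (var 0) (var 0)))

/-- Reducts of `(ηη)δ^k` (`b = false`, closed) and the bodies occurring
under the head abstraction (`b = true`). -/
inductive C : Bool → ℕ → Lam → Prop
  | base : C false 0 (app etaC etaC)
  | appd {k t} : C false k t → C false (k+1) (app t delta)
  | dapp {k t} : C false k t → C false k (app delta t)
  | absW {k w} : C true k w → C false k (abs w)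
  | varR {k t} : C false k t → C true k (app t (var 0))
  | hd {k w} : C true k w → C true k (app (var 0) w)

/-- Bodies of reducts of Curry's `Y`. -/
inductive W0 : Lam → Prop
  | base : W0 (app omg omg)
  | hd {w} : W0 w → W0 (app (var 0) w)

theorem hasRedex_etaC : hasRedex etaC = false := by decide
theorem hasRedex_delta : hasRedex delta = false := by decide
theorem hasRedex_omg : hasRedex omg = false := by decide

theorem not_beta_etaC {t : Lam} (h : Beta etaC t) : False := by
  have := h.hasRedex; rw [hasRedex_etaC] at this; exact Bool.false_ne_true this
theorem not_beta_delta {t : Lam} (h : Beta delta t) : False := by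
  have := h.hasRedex; rw [hasRedex_delta] at this; exact Bool.false_ne_true this
theorem not_beta_omg {t : Lam} (h : Beta omg t) : False := by
  have := h.hasRedex; rw [hasRedex_omg] at this; exact Bool.false_ne_true this
theorem not_beta_var {n : ℕ} {t : Lam} (h : Beta (var n) t) : False := by cases h

theorem bnd_etaC : Bnd 0 etaC := by simp [etaC, Bnd]
theorem bnd_delta : Bnd 0 delta := by simp [delta, Bnd]
theorem bnd_omg : Bnd 1 omg := by simp [omg, Bnd]

/-- Members of `C` are closed (at level 0 resp. 1). -/
theorem C.bnd {b : Bool} {k : ℕ} {t : Lam} (h : C b k t) : Bnd (cond b 1 0) t := by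
  induction h with
  | base => exact ⟨bnd_etaC, bnd_etaC⟩
  | appd _ ih => exact ⟨ih, bnd_delta⟩
  | dapp _ ih => exact ⟨bnd_delta, ih⟩
  | absW _ ih => exact (ih : Bnd 1 _)
  | varR _ ih => exact ⟨Bnd.mono (ih : Bnd 0 _) (Nat.zero_le 1), Nat.zero_lt_one⟩
  | hd _ ih => exact ⟨Nat.zero_lt_one, ih⟩

theorem W0.bnd {w : Lam} (h : W0 w) : Bnd 1 w := by
  induction h with
  | base => exact ⟨bnd_omg, bnd_omg⟩
  | hd _ ih => exact ⟨by simp [Bnd], ih⟩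

theorem C.lift_eq {k : ℕ} {t : Lam} (h : C false k t) (d : ℕ) : lift d t = t :=
  Bnd.lift_eq h.bnd (Nat.zero_le d)
theorem C.subst_eq {k : ℕ} {t : Lam} (h : C false k t) (j : ℕ) (u : Lam) : subst t j u = t :=
  Bnd.subst_eq h.bnd (Nat.zero_le j)

theorem C.subst_var_aux {b : Bool} {k : ℕ} {w : Lam} (h : C b k w) :
    b = true → subst w 0 (var 0) = w := by
  induction h with
  | base => intro hb; cases hb
  | appd _ _ => intro hb; cases hb
  | dapp _ _ => intro hb; cases hb
  | absW _ _ => intro hb; cases hb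
  | varR ht _ => intro _; simp only [subst, ht.subst_eq]; norm_num
  | hd _ ih => intro _; simp only [subst, ih rfl]; norm_num

theorem C.subst_var {k : ℕ} {w : Lam} (h : C true k w) : subst w 0 (var 0) = w :=
  h.subst_var_aux rfl

theorem C.subst_delta_aux {b : Bool} {k : ℕ} {w : Lam} (h : C b k w) :
    b = true → C false (k+1) (subst w 0 delta) := by
  induction h with
  | base => intro hb; cases hb
  | appd _ _ => intro hb; cases hb
  | dapp _ _ => intro hb; cases hb
  | absW _ _ => intro hb; cases hb
  | @varR k t ht _ =>
    intro _
    have heq : subst (app t (var 0)) 0 delta = app t delta := by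
      simp only [subst, ht.subst_eq]; norm_num
    rw [heq]; exact C.appd ht
  | @hd k w hw ih =>
    intro _
    have heq : subst (app (var 0) w) 0 delta = app delta (subst w 0 delta) := by
      simp only [subst]; norm_num
    rw [heq]; exact C.dapp (ih rfl)

theorem C.subst_delta {k : ℕ} {w : Lam} (h : C true k w) :
    C false (k+1) (subst w 0 delta) := h.subst_delta_aux rfl

/-! ### Closure of the classes under reduction -/

theorem C.step {b : Bool} {k : ℕ} {t : Lam} (h : C b k t) :
    ∀ t', Beta t t' → C b k t' := by
  induction h with
  | base =>
    intro t' hstep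
    rw [show etaC = Lam.abs (abs (app (var 0) (app (app (var 1) (var 1)) (var 0))))
      from rfl] at hstep
    cases hstep with
    | beta =>
      have heq : subst (abs (app (var 0) (app (app (var 1) (var 1)) (var 0)))) 0
          (Lam.abs (abs (app (var 0) (app (app (var 1) (var 1)) (var 0)))))
          = abs (app (var 0) (app (app etaC etaC) (var 0))) := by decide
      rw [heq]
      exact C.absW (C.hd (C.varR C.base))
    | appL _ h' => exact absurd h' not_beta_etaC
    | appR _ h' => exact absurd h' not_beta_etaC
  | @appd k u hu ih =>
    intro t' hstep
    cases hstep with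
    | beta =>
      cases hu with
      | absW hw => exact C.subst_delta hw
    | appL _ h' => exact C.appd (ih _ h')
    | appR _ h' => exact absurd h' not_beta_delta
  | @dapp k u hu ih =>
    intro t' hstep
    rw [show delta = Lam.abs (abs (app (var 0) (app (var 1) (var 0)))) from rfl] at hstep
    cases hstep with
    | beta =>
      have heq : subst (abs (app (var 0) (app (var 1) (var 0)))) 0 u
          = abs (app (var 0) (app u (var 0))) := by
        simp only [subst, lift]
        norm_num
        exact hu.lift_eq 0
      rw [heq]
      exact C.absW (C.hd (C.varR hu))
    | appL _ h' => exact absurd h' not_beta_delta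
    | appR _ h' => exact C.dapp (ih _ h')
  | @absW k w hw ih =>
    intro t' hstep
    cases hstep with
    | abs h' => exact C.absW (ih _ h')
  | @varR k u hu ih =>
    intro t' hstep
    cases hstep with
    | beta =>
      cases hu with
      | absW hw => rw [C.subst_var hw]; exact hw
    | appL _ h' => exact C.varR (ih _ h')
    | appR _ h' => exact (not_beta_var h').elim
  | @hd k w hw ih =>
    intro t' hstep
    cases hstep with
    | appL _ h' => exact (not_beta_var h').elim
    | appR _ h' => exact C.hd (ih _ h')

theorem W0.step {w : Lam} (h : W0 w) : ∀ w', Beta w w' → W0 w' := by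
  induction h with
  | base =>
    intro w' hstep
    rw [show omg = Lam.abs (app (var 1) (app (var 0) (var 0))) from rfl] at hstep
    cases hstep with
    | beta =>
      have heq : subst (app (var 1) (app (var 0) (var 0))) 0
          (Lam.abs (app (var 1) (app (var 0) (var 0))))
          = app (var 0) (app omg omg) := by decide
      rw [heq]
      exact W0.hd W0.base
    | appL _ h' => exact absurd h' not_beta_omg
    | appR _ h' => exact absurd h' not_beta_omg
  | @hd w hw ih =>
    intro w' hstep
    cases hstep with
    | appL _ h' => exact (not_beta_var h').elim
    | appR _ h' => exact W0.hd (ih _ h')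

/-- Class of reducts of Curry's fpc. -/
def T0 (t : Lam) : Prop := ∃ w, t = abs w ∧ W0 w

theorem T0.step {t : Lam} (h : T0 t) : ∀ t', Beta t t' → T0 t' := by
  obtain ⟨w, rfl, hw⟩ := h
  intro t' hstep
  cases hstep with
  | abs h' => exact ⟨_, rfl, hw.step _ h'⟩

theorem C.star {k : ℕ} {t t' : Lam} (h : C false k t) (hs : BetaStar t t') : C false k t' := by
  induction hs with
  | refl => exact h
  | tail _ hstep ih => exact ih.step _ hstep

theorem T0.star {t t' : Lam} (h : T0 t) (hs : BetaStar t t') : T0 t' := by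
  induction hs with
  | refl => exact h
  | tail _ hstep ih => exact ih.step _ hstep

/-! ### Disjointness -/

theorem not_C_delta {b : Bool} {k : ℕ} (h : C b k delta) : False := by
  rw [show delta = Lam.abs (abs (app (var 0) (app (var 1) (var 0)))) from rfl] at h
  cases h with
  | absW hw => cases hw

theorem not_C_var {b : Bool} {k n : ℕ} (h : C b k (var n)) : False := by cases h

theorem C.uniq {b : Bool} {k : ℕ} {t : Lam} (h : C b k t) :
    ∀ {b' : Bool} {k' : ℕ}, C b' k' t → b = b' ∧ k = k' := by
  induction h with
  | base =>
    intro b' k' h'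
    cases h' with
    | base => exact ⟨rfl, rfl⟩
  | @appd j u hu ih =>
    intro b' k' h'
    cases h' with
    | appd h2 => exact ⟨rfl, by rw [(ih h2).2]⟩
    | dapp h2 => exact (not_C_delta hu).elim
    | hd h2 => exact (not_C_var hu).elim
  | @dapp j u hu ih =>
    intro b' k' h'
    cases h' with
    | appd h2 => exact (not_C_delta h2).elim
    | dapp h2 => exact ⟨rfl, (ih h2).2⟩
    | varR h2 => exact (not_C_delta h2).elim
  | @absW j w hw ih =>
    intro b' k' h'
    cases h' with
    | absW h2 => exact ⟨rfl, (ih h2).2⟩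
  | @varR j u hu ih =>
    intro b' k' h'
    cases h' with
    | dapp h2 => exact (not_C_delta hu).elim
    | varR h2 => exact ⟨rfl, (ih h2).2⟩
    | hd h2 => exact (not_C_var hu).elim
  | @hd j w hw ih =>
    intro b' k' h'
    cases h' with
    | appd h2 => exact (not_C_var h2).elim
    | varR h2 => exact (not_C_var h2).elim
    | hd h2 => exact ⟨rfl, (ih h2).2⟩

theorem W0.not_C {w : Lam} (h : W0 w) : ∀ {b : Bool} {k : ℕ}, C b k w → False := by
  induction h with
  | base =>
    intro b k hC
    cases hC
  | @hd w hw ih =>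
    intro b k hC
    cases hC with
    | appd h2 => exact not_C_var h2
    | varR h2 => exact not_C_var h2
    | hd h2 => exact ih h2

theorem T0_not_C {t : Lam} (h : T0 t) {b : Bool} {k : ℕ} (hC : C b k t) : False := by
  obtain ⟨w, rfl, hw⟩ := h
  cases hC with
  | absW h2 => exact hw.not_C h2

/-! ### Membership of the Böhm sequence -/

theorem C_boehm : ∀ n : ℕ, C false n (appN (app etaC etaC) delta n) := by
  intro n
  induction n with
  | zero => exact C.base
  | succ n ih => exact C.appd ih

theorem T0_curry : T0 curryY := ⟨_, rfl, W0.base⟩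

theorem boehm_sequence_no_duplicates' :
    ∀ n m : ℕ, n ≠ m → ¬ Conv (boehmY n) (boehmY m) := by
  intro n m hne hconv
  obtain ⟨u, h1, h2⟩ := conv_join hconv
  cases n with
  | zero =>
    cases m with
    | zero => exact hne rfl
    | succ m =>
      have hu0 : T0 u := T0.star T0_curry h1
      have hum : C false m u := C.star (C_boehm m) h2
      exact T0_not_C hu0 hum
  | succ n =>
    cases m with
    | zero =>
      have hu0 : T0 u := T0.star T0_curry h2
      have hum : C false n u := C.star (C_boehm n) h1
      exact T0_not_C hu0 hum
    | succ m =>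
      have hun : C false n u := C.star (C_boehm n) h1
      have hum : C false m u := C.star (C_boehm m) h2
      exact hne (by rw [(hun.uniq hum).2])

/-- the Böhm sequence contains no duplicates. -/
theorem boehm_sequence_no_duplicates :
    ∀ n m : ℕ, n ≠ m → ¬ Conv (boehmY n) (boehmY m) := by
  exact boehm_sequence_no_duplicates'

end Lam
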